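/- Let E be a commutative ring in which 2 is invertible, let h be a finite-rank free E-module, and let s : h → h be an E-linear involution such that h = ker(s − 1) ⊕ ker(s + 1) and ker(s + 1) is free of rank 1, with basis element α. Let S = Sym_E(h) be the symmetric algebra of h over E, with the induced action of s by E-algebra automorphisms, and let S^s ⊆ S be the subalgebra of s-invariant elements. Then S is a free S^s-module of rank 2, with basis {1, α}. -/

import Mathlib

universe u v w

/-- `S`, together with the `E`-linear map `ι : h →ₗ[E] S`, is a symmetric algebra of the
`E`-module `h`: every `E`-linear map from `h` to a commutative `E`-algebra factors uniquely
through an `E`-algebra homomorphism out of `S`. -/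
structure IsSymmetricAlgebra' {E : Type u} [CommRing E] {h : Type v} [AddCommGroup h]
    [Module E h] {S : Type w} [CommRing S] [Algebra E S] (ι : h →ₗ[E] S) : Prop where
  existsUnique_lift : ∀ (A : Type (max u v w)) [CommRing A] [Algebra E A] (f : h →ₗ[E] A),
      ∃! g : S →ₐ[E] A, ∀ x : h, g (ι x) = f x

section Aux

/-- doubling cancellation -/
theorem aux_smul_cancel2 {E : Type*} [CommRing E] (h2 : IsUnit (2 : E)) {M : Type*}
    [AddCommGroup M] [Module E M] {m : M} (hm : m + m = 0) : m = 0 := by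
  have h2m : (2 : E) • m = 0 := by rw [two_smul]; exact hm
  calc m = (1 : E) • m := (one_smul E m).symm
    _ = ((↑h2.unit⁻¹ * ↑h2.unit : E)) • m := by rw [Units.inv_mul]
    _ = (↑h2.unit⁻¹ : E) • ((2 : E) • m) := by rw [mul_smul, h2.unit_spec]
    _ = 0 := by rw [h2m, smul_zero]

/-- `ULift.up` as an algebra hom. -/
def aux_upAlgHom (E : Type u) (A : Type v) [CommRing E] [CommRing A] [Algebra E A] :
    A →ₐ[E] ULift.{w} A :=
  { toFun := ULift.up, map_one' := rfl, map_mul' := fun _ _ => rfl,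
    map_zero' := rfl, map_add' := fun _ _ => rfl, commutes' := fun _ => rfl }

/-- Extensionality principle: two algebra maps out of a symmetric algebra agreeing on the image
of `ι` coincide. -/
theorem IsSymmetricAlgebra'.algHom_ext {E : Type u} [CommRing E] {h : Type v} [AddCommGroup h]
    [Module E h] {S : Type w} [CommRing S] [Algebra E S] {ι : h →ₗ[E] S}
    (hS : IsSymmetricAlgebra' ι) {A : Type w} [CommRing A] [Algebra E A] {k₁ k₂ : S →ₐ[E] A}
    (hk : ∀ x, k₁ (ι x) = k₂ (ι x)) : k₁ = k₂ := by
  obtain ⟨g, hg, hun⟩ := hS.existsUnique_lift (ULift.{max u v} A)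
    ((ULift.moduleEquiv.symm : A ≃ₗ[E] ULift.{max u v} A).toLinearMap.comp
      (k₁.toLinearMap.comp ι))
  have h1 : (aux_upAlgHom E A).comp k₁ = g := hun _ fun x => rfl
  have h2 : (aux_upAlgHom E A).comp k₂ = g := hun _ fun x => by
    show ULift.up (k₂ (ι x)) = ULift.up (k₁ (ι x))
    rw [hk]
  ext a
  exact congrArg ULift.down (AlgHom.congr_fun (h1.trans h2.symm) a)

/-- Produce an algebra hom out of a symmetric algebra lifting a linear map into any
commutative algebra in the same universe as `S`. -/
theorem IsSymmetricAlgebra'.lift_exists {E : Type u} [CommRing E] {h : Type v} [AddCommGroup h]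
    [Module E h] {S : Type w} [CommRing S] [Algebra E S] {ι : h →ₗ[E] S}
    (hS : IsSymmetricAlgebra' ι) {A : Type w} [CommRing A] [Algebra E A] (f : h →ₗ[E] A) :
    ∃ g : S →ₐ[E] A, ∀ x : h, g (ι x) = f x := by
  obtain ⟨g, hg, -⟩ := hS.existsUnique_lift (ULift.{max u v} A)
    ((ULift.moduleEquiv.symm : A ≃ₗ[E] ULift.{max u v} A).toLinearMap.comp f)
  refine ⟨(AlgHom.comp
    { toFun := ULift.down, map_one' := rfl, map_mul' := fun _ _ => rfl,
      map_zero' := rfl, map_add' := fun _ _ => rfl, commutes' := fun _ => rfl } g :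
      S →ₐ[E] A), fun x => ?_⟩
  show (g (ι x)).down = f x
  rw [hg x]
  rfl

set_option maxHeartbeats 1600000 in
set_option synthInstance.maxHeartbeats 200000 in
/-- The core argument, with the eigenspace decomposition abstracted. -/
theorem aux_main {E : Type u} [CommRing E] (h2 : IsUnit (2 : E))
    {h : Type v} [AddCommGroup h] [Module E h]
    {P Q : Submodule E h} (hcompl : IsCompl P Q)
    (α : h) (bα : Module.Basis (Fin 1) E Q) (hbα : ((bα 0 : Q) : h) = α)
    {S : Type w} [CommRing S] [Algebra E S] (ι : h →ₗ[E] S)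
    (hS : IsSymmetricAlgebra' ι) (σ : S →ₐ[E] S)
    (hσP : ∀ y : h, y ∈ P → σ (ι y) = ι y) (hσα : σ (ι α) = -ι α) :
    ∃ b : Module.Basis (Fin 2) (AlgHom.equalizer σ (AlgHom.id E S)) S,
      b 0 = 1 ∧ b 1 = ι α := by
  classical
  set R := AlgHom.equalizer σ (AlgHom.id E S) with hRdef
  set prP : h →ₗ[E] P := P.linearProjOfIsCompl Q hcompl with hprP
  set prQ : h →ₗ[E] Q := Q.linearProjOfIsCompl P hcompl.symm with hprQ
  set c : h →ₗ[E] E := (bα.coord 0).comp prQ with hc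
  have hαQ : α ∈ Q := by rw [← hbα]; exact (bα 0).2
  have hsum : ∀ x : h, (↑(prP x) : h) + ↑(prQ x) = x := fun x =>
    Submodule.projection_add_projection_eq_self hcompl x
  have hQ1 : ∀ y : Q, (y : h) = ((bα.coord 0) y) • α := by
    intro y
    conv_lhs => rw [← bα.sum_repr y]
    rw [Fin.sum_univ_one, Module.Basis.coord_apply]
    push_cast
    rw [hbα]
  have hprQasc : ∀ x : h, (↑(prQ x) : h) = c x • α := fun x => hQ1 (prQ x)
  have hdecomp : ∀ x : h, x = ↑(prP x) + c x • α := by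
    intro x; rw [← hprQasc]; exact (hsum x).symm
  have hprPα : prP α = 0 := Submodule.linearProjOfIsCompl_apply_right' hcompl hαQ
  have hcα : c α = 1 := by
    have h1 : prQ α = bα 0 := by
      rw [← hbα]
      exact Submodule.linearProjOfIsCompl_apply_left hcompl.symm (bα 0)
    rw [hc, LinearMap.comp_apply, h1, Module.Basis.coord_apply, Module.Basis.repr_self,
      Finsupp.single_eq_same]
  have hprPP : ∀ y : P, prP ↑y = y := fun y =>
    Submodule.linearProjOfIsCompl_apply_left hcompl y
  have hcP : ∀ y : P, c ↑y = 0 := by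
    intro y
    rw [hc, LinearMap.comp_apply,
      (show prQ ↑y = 0 from Submodule.linearProjOfIsCompl_apply_right' hcompl.symm y.2),
      map_zero]
  -- decomposition of σ ∘ ι
  have hσι : ∀ x : h, σ (ι x) = ι ↑(prP x) - c x • ι α := by
    intro x
    conv_lhs => rw [hdecomp x]
    rw [map_add, map_smul, map_add, map_smul, hσP _ (prP x).2, hσα, smul_neg,
      sub_eq_add_neg]
  have hσσ' : ∀ a : S, σ (σ a) = a := by
    have : σ.comp σ = AlgHom.id E S := hS.algHom_ext fun x => by
      rw [AlgHom.comp_apply, hσι, map_sub, map_smul, hσP _ (prP x).2, hσα, smul_neg,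
        sub_neg_eq_add, AlgHom.id_apply]
      conv_rhs => rw [hdecomp x]
      rw [map_add, map_smul]
    exact fun a => AlgHom.congr_fun this a
  -- the subalgebra map
  have hmem : ∀ x : h, ι ↑(prP x) ∈ R := by
    intro x
    rw [hRdef, AlgHom.mem_equalizer, hσP _ (prP x).2]
    rfl
  have hfix : ∀ t : R, σ ↑t = ↑t := by
    intro t
    have ht := t.2
    exact ht
  clear_value R
  -- the linear map into R[X]
  let j : h →ₗ[E] Polynomial R :=
    { toFun := fun x => Polynomial.C (⟨ι ↑(prP x), hmem x⟩ : R) + c x • Polynomial.X,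
      map_add' := fun x y => by
        have h1 : (⟨ι ↑(prP (x + y)), hmem (x + y)⟩ : R)
            = ⟨ι ↑(prP x), hmem x⟩ + ⟨ι ↑(prP y), hmem y⟩ := by
          ext; simp
        rw [h1, Polynomial.C_add, map_add c, add_smul]
        abel
      map_smul' := fun e x => by
        have h1 : (⟨ι ↑(prP (e • x)), hmem (e • x)⟩ : R) = e • ⟨ι ↑(prP x), hmem x⟩ := by
          ext
          simp [map_smul]
        rw [h1, ← Polynomial.smul_C, map_smul c, RingHom.id_apply, smul_add, smul_smul,
          smul_eq_mul] }
  have hjapp : ∀ x : h,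
      j x = Polynomial.C (⟨ι ↑(prP x), hmem x⟩ : R) + c x • Polynomial.X := fun _ => rfl
  have hjα : j α = Polynomial.X := by
    rw [hjapp]
    have : (⟨ι ↑(prP α), hmem α⟩ : R) = 0 := by
      ext; simp [hprPα]
    rw [this, map_zero, zero_add, hcα, one_smul]
  -- theta
  obtain ⟨θ, hθ⟩ := hS.lift_exists (A := Polynomial R) j
  -- evaluation back
  let ev : Polynomial R →ₐ[E] S := Polynomial.aevalTower R.val (ι α)
  have hevC : ∀ t : R, ev (Polynomial.C t) = ↑t := fun t => Polynomial.aevalTower_C _ _ _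
  have hevX : ev Polynomial.X = ι α := Polynomial.aevalTower_X _ _
  have hretr : ∀ a : S, ev (θ a) = a := by
    have : ev.comp θ = AlgHom.id E S := hS.algHom_ext fun x => by
      rw [AlgHom.comp_apply, hθ, hjapp, map_add, hevC, map_smul, hevX, AlgHom.id_apply]
      show ι ↑(prP x) + c x • ι α = ι x
      rw [← map_smul, ← map_add, ← hdecomp]
    exact fun a => AlgHom.congr_fun this a
  -- the twist on R[X]
  let τ : Polynomial R →ₐ[E] Polynomial R :=
    Polynomial.aevalTower Polynomial.CAlgHom (-Polynomial.X)
  have hτC : ∀ t : R, τ (Polynomial.C t) = Polynomial.C t := fun t =>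
    Polynomial.aevalTower_C _ _ _
  have hτX : τ Polynomial.X = -Polynomial.X := Polynomial.aevalTower_X _ _
  have hτcoeff : ∀ (q : Polynomial R) (k : ℕ), (τ q).coeff k = (-1) ^ k * q.coeff k := by
    intro q
    induction q using Polynomial.induction_on' with
    | add p q hp hq => intro k; rw [map_add, Polynomial.coeff_add, hp, hq,
        Polynomial.coeff_add, mul_add]
    | monomial n a =>
      intro k
      have hmono : τ (Polynomial.monomial n a)
          = Polynomial.C ((-1) ^ n * a) * Polynomial.X ^ n := by
        rw [← Polynomial.C_mul_X_pow_eq_monomial, map_mul, map_pow, hτC, hτX]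
        rw [Polynomial.C_mul, Polynomial.C_pow, Polynomial.C_neg, Polynomial.C_1]
        ring
      rw [hmono, Polynomial.coeff_C_mul, Polynomial.coeff_X_pow, Polynomial.coeff_monomial]
      by_cases hnk : n = k
      · subst hnk; simp
      · simp [hnk, Ne.symm hnk]
  -- compatibilities
  have hθσ : θ.comp σ = τ.comp θ := hS.algHom_ext fun x => by
    have h1 : (⟨ι ↑(prP ↑(prP x)), hmem ↑(prP x)⟩ : R) = ⟨ι ↑(prP x), hmem x⟩ := by
      ext; simp [hprPP]
    have h0 : (⟨ι ↑(prP α), hmem α⟩ : R) = 0 := by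
      ext; simp [hprPα]
    simp only [AlgHom.comp_apply, hσι, map_sub, map_neg, map_smul, hθ, hjapp, map_add,
      hτC, hτX, h1, h0, hcP, hcα, Polynomial.C_0, zero_add, zero_smul, add_zero, one_smul,
      smul_neg, sub_eq_add_neg, neg_smul]
  have hσev : ∀ q : Polynomial R, σ (ev q) = ev (τ q) := by
    have : σ.comp ev = ev.comp τ := by
      apply Polynomial.algHom_ext'
      · ext t
        show σ (ev (Polynomial.C t)) = ev (τ (Polynomial.C t))
        rw [hevC, hτC, hevC]
        exact hfix t
      · show σ (ev Polynomial.X) = ev (τ Polynomial.X)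
        rw [hevX, hτX, map_neg, hevX, hσα]
    exact fun q => AlgHom.congr_fun this q
  -- regularity of ι α
  have hreg : ∀ b : S, b * ι α = 0 → b = 0 := by
    intro b hb
    have h1 : θ b * Polynomial.X = 0 := by
      have := congrArg θ hb
      rw [map_mul, hθ, hjα, map_zero] at this
      exact this
    have h2 : θ b = 0 := by
      ext k
      have := congrArg (fun p : Polynomial R => p.coeff (k + 1)) h1
      simpa [Polynomial.coeff_mul_X] using this
    calc b = ev (θ b) := (hretr b).symm
      _ = 0 := by rw [h2, map_zero]
  -- anti-invariants are multiples of ι α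
  have hF1 : ∀ a : S, σ a = -a → ∃ r : S, σ r = r ∧ a = r * ι α := by
    intro a ha
    have hτq : τ (θ a) = -θ a := by
      have h1 : θ (σ a) = τ (θ a) := AlgHom.congr_fun hθσ a
      rw [ha, map_neg] at h1
      exact h1.symm
    have hcoeff0 : ∀ k : ℕ, Even k → (θ a).coeff k = 0 := by
      intro k hk
      have h1 := hτcoeff (θ a) k
      rw [hτq, Even.neg_one_pow hk, one_mul, Polynomial.coeff_neg] at h1
      exact aux_smul_cancel2 h2 (by linear_combination -h1)
    have hqe : (θ a).divX * Polynomial.X = θ a := by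
      have := Polynomial.divX_mul_X_add (θ a)
      rwa [hcoeff0 0 Even.zero, map_zero, add_zero] at this
    have hτdiv : τ (θ a).divX = (θ a).divX := by
      ext k
      rw [hτcoeff]
      rcases Nat.even_or_odd k with he | ho
      · rw [Even.neg_one_pow he, one_mul]
      · simp only [Odd.neg_one_pow ho, neg_one_mul, Polynomial.coeff_divX,
          hcoeff0 (k + 1) (by simpa using ho.add_one), neg_zero]
    refine ⟨ev (θ a).divX, ?_, ?_⟩
    · rw [hσev, hτdiv]
    · calc a = ev (θ a) := (hretr a).symm
        _ = ev ((θ a).divX * Polynomial.X) := by rw [hqe]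
        _ = ev (θ a).divX * ι α := by rw [map_mul, hevX]
  -- the basis vectors
  set bv : Fin 2 → S := ![1, ι α] with hbv
  have hbv0 : bv 0 = 1 := rfl
  have hbv1 : bv 1 = ι α := rfl
  clear_value bv
  -- spanning
  have hspan : ∀ a : S, a ∈ Submodule.span R (Set.range bv) := by
    intro a
    set u : S := (↑h2.unit⁻¹ : E) • (a + σ a) with hu
    clear_value u
    have hσu : σ u = u := by
      rw [hu, map_smul, map_add, hσσ']
      rw [add_comm]
    have h2u : a + σ a = u + u := by
      have h1 : (↑h2.unit⁻¹ * 2 : E) = 1 := h2.val_inv_mul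
      calc a + σ a = ((↑h2.unit⁻¹ * 2 : E)) • (a + σ a) := by rw [h1, one_smul]
        _ = u + u := by rw [mul_smul, two_smul, smul_add, ← hu]
    have hanti : σ (a - u) = -(a - u) := by
      rw [map_sub, hσu]
      linear_combination h2u
    obtain ⟨r, hσr, hru⟩ := hF1 (a - u) hanti
    have hmu : u ∈ R := by rw [hRdef, AlgHom.mem_equalizer]; exact hσu
    have hmr : r ∈ R := by rw [hRdef, AlgHom.mem_equalizer]; exact hσr
    have hrepr : a = (⟨u, hmu⟩ : R) • bv 0 + (⟨r, hmr⟩ : R) • bv 1 := by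
      rw [hbv0, hbv1]
      show a = u * (1 : S) + r * ι α
      rw [mul_one]
      linear_combination hru
    rw [hrepr]
    exact Submodule.add_mem _
      (Submodule.smul_mem _ _ (Submodule.subset_span ⟨0, hbv0 ▸ rfl⟩))
      (Submodule.smul_mem _ _ (Submodule.subset_span ⟨1, hbv1 ▸ rfl⟩))
  -- linear independence
  have hli : LinearIndependent R bv := by
    rw [Fintype.linearIndependent_iff]
    intro g hg
    rw [Fin.sum_univ_two, hbv0, hbv1] at hg
    have hg' : (↑(g 0) : S) + ↑(g 1) * ι α = 0 := by
      rw [← hg]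
      show ((g 0 : S) + (g 1 : S) * ι α) = (g 0 : S) * 1 + (g 1 : S) * ι α
      rw [mul_one]
    have hσg0 : σ ↑(g 0) = ↑(g 0) := hfix (g 0)
    have hσg1 : σ ↑(g 1) = ↑(g 1) := hfix (g 1)
    have hg'' : (↑(g 0) : S) - ↑(g 1) * ι α = 0 := by
      have := congrArg σ hg'
      rw [map_add, map_mul, hσg0, hσg1, hσα, map_zero] at this
      linear_combination this
    have hg0 : (↑(g 0) : S) = 0 := by
      refine aux_smul_cancel2 h2 ?_
      linear_combination hg' + hg''
    have hg1 : (↑(g 1) : S) = 0 := by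
      have hmul : (↑(g 1) : S) * ι α = 0 := by linear_combination hg' - hg0
      exact hreg _ hmul
    intro i
    fin_cases i
    · exact Subtype.ext hg0
    · exact Subtype.ext hg1
  refine ⟨Module.Basis.mk hli (fun a _ => hspan a), ?_, ?_⟩
  · rw [Module.Basis.mk_apply]
    exact hbv0
  · rw [Module.Basis.mk_apply]
    exact hbv1

end Aux

/-- Let `E` be a commutative ring in which `2` is invertible, `h` a finite-rank
free `E`-module and `s : h → h` an `E`-linear involution such that
`h = ker(s - 1) ⊕ ker(s + 1)` with `ker(s + 1)` free of rank one with basis element `α`.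
Let `S = Sym_E(h)` (a commutative `E`-algebra `S` with a map `ι : h → S` satisfying the
universal property of the symmetric algebra), endowed with the induced action of `s` by the
algebra automorphism `σ` (characterized by `σ ∘ ι = ι ∘ s`), and let `S^s` be the subalgebra
of `σ`-invariants.  Then `S` is a free `S^s`-module of rank `2` with basis `{1, α}`. -/
theorem symmetricAlgebra_free_rank_two_over_involution_invariants
    {E : Type u} [CommRing E] (h2 : IsUnit (2 : E))
    {h : Type v} [AddCommGroup h] [Module E h] [Module.Free E h] [Module.Finite E h]
    (s : h →ₗ[E] h) (hs : s ∘ₗ s = LinearMap.id)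
    (hcompl : IsCompl (LinearMap.ker (s - LinearMap.id))
      (LinearMap.ker (s + LinearMap.id)))
    (α : h) (bα : Module.Basis (Fin 1) E (LinearMap.ker (s + LinearMap.id)))
    (hbα : ((bα 0 : LinearMap.ker (s + LinearMap.id)) : h) = α)
    {S : Type w} [CommRing S] [Algebra E S] (ι : h →ₗ[E] S)
    (hS : IsSymmetricAlgebra' ι)
    (σ : S →ₐ[E] S) (hσ : ∀ x : h, σ (ι x) = ι (s x)) :
    ∃ b : Module.Basis (Fin 2) (AlgHom.equalizer σ (AlgHom.id E S)) S,
      b 0 = 1 ∧ b 1 = ι α := by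
  have hαQ : α ∈ LinearMap.ker (s + LinearMap.id) := by rw [← hbα]; exact (bα 0).2
  have hsα : s α = -α := by
    have := LinearMap.mem_ker.mp hαQ
    rw [LinearMap.add_apply, LinearMap.id_apply, add_eq_zero_iff_eq_neg] at this
    exact this
  refine aux_main h2 hcompl α bα hbα ι hS σ ?_ ?_
  · intro y hy
    have := LinearMap.mem_ker.mp hy
    rw [LinearMap.sub_apply, LinearMap.id_apply, sub_eq_zero] at this
    rw [hσ, this]
  · rw [hσ, hsα, map_neg]
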